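/- There exists a field extension ℚ ⊂ K of degree 4 (hence not of prime degree) such that there is no intermediate ring strictly between ℚ and K; for example K = ℚ(α) where α is a root of an irreducible quartic over ℚ whose Galois group of the splitting field is S₄. -/

import Mathlib

open Polynomial IntermediateField

/-! Auxiliary lemmas -/

private lemma quad_coeffs {F : Type*} [Field F] {p q r s : F}
    (h : (X^2 + C p * X + C q) * (X^2 + C r * X + C s) = X^4 - X - C 1) :
    p + r = 0 ∧ q + s + p*r = 0 ∧ p*s + q*r = -1 ∧ q*s = -1 := by
  have h' : X^4 + C (p+r) * X^3 + C (q+s+p*r) * X^2 + C (p*s+q*r) * X + C (q*s)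
      = X^4 + C 0 * X^3 + C 0 * X^2 + C (-1) * X + C (-1) := by
    simp only [C_add, C_mul, C_neg, C_1, C_0] at h ⊢
    linear_combination h
  have e3 := congrArg (fun φ : F[X] => φ.coeff 3) h'
  have e2 := congrArg (fun φ : F[X] => φ.coeff 2) h'
  have e1 := congrArg (fun φ : F[X] => φ.coeff 1) h'
  have e0 := congrArg (fun φ : F[X] => φ.coeff 0) h'
  simp only [coeff_add, coeff_C_mul, coeff_X_pow, coeff_C, coeff_X, coeff_one] at e3 e2 e1 e0
  norm_num at e3 e2 e1 e0
  exact ⟨e3, e2, e1, e0⟩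

/-- If the quartic `X^4 - X - 1` factors into two monic quadratics, then the square of the
linear coefficient of the first factor is a root of the resolvent cubic `Y^3 + 4Y - 1`. -/
private lemma quad_factor_aux {F : Type*} [Field F] {p q r s : F}
    (h : (X^2 + C p * X + C q) * (X^2 + C r * X + C s) = X^4 - X - C 1) :
    (p^2)^3 + 4 * (p^2) - 1 = 0 := by
  obtain ⟨e3, e2, e1, e0⟩ := quad_coeffs h
  have hr : r = -p := by linear_combination e3
  subst hr
  have hqs : q + s = p^2 := by linear_combination e2
  have hsq : p * (s - q) = -1 := by linear_combination e1
  have h1 : p^2*(q+s)^2 = p^6 := by rw [hqs]; ring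
  have h2 : (p*(s-q))^2 = 1 := by rw [hsq]; ring
  linear_combination -h1 + h2 + 4*p^2*e0

/-- A monic polynomial of degree 2 is `X^2 + C a X + C b`. -/
private lemma monic_quadratic_eq {F : Type*} [Field F] {g : F[X]} (hm : g.Monic)
    (h2 : g.natDegree = 2) : g = X^2 + C (g.coeff 1) * X + C (g.coeff 0) := by
  ext n
  have hlc : g.coeff 2 = 1 := by
    have := hm.leadingCoeff
    rwa [leadingCoeff, h2] at this
  match n with
  | 0 => simp [coeff_X_pow]
  | 1 => simp [coeff_X_pow]
  | 2 => simp [coeff_X_pow, hlc]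
  | (n+3) =>
    have : g.natDegree < n + 3 := by omega
    rw [coeff_eq_zero_of_natDegree_lt this]
    simp [coeff_X_pow]

/-- The resolvent cubic has no rational root. -/
private lemma cubic_no_rat_root (x : ℚ) : x^3 + 4*x - 1 ≠ 0 := by
  intro hx
  have hint : IsIntegral ℤ x := by
    refine ⟨X^3 + 4*X - 1, ?_, ?_⟩
    · monicity!
    · simp only [eval₂_sub, eval₂_add, eval₂_mul, eval₂_pow, eval₂_X, eval₂_one, eval₂_ofNat]
      linear_combination hx
  obtain ⟨n, rfl⟩ := IsIntegrallyClosed.isIntegral_iff.mp hint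
  have hx' : (n:ℚ)^3 + 4*(n:ℚ) - 1 = 0 := by simpa using hx
  have hn : n^3 + 4*n - 1 = 0 := by exact_mod_cast hx'
  have hdvd : n ∣ 1 := ⟨n^2 + 4, by linarith⟩
  rcases Int.isUnit_iff.mp (isUnit_of_dvd_one hdvd) with rfl | rfl <;> omega

/-- The quartic has no rational root. -/
private lemma quartic_no_rat_root (x : ℚ) : x^4 - x - 1 ≠ 0 := by
  intro hx
  have hint : IsIntegral ℤ x := by
    refine ⟨X^4 - X - 1, ?_, ?_⟩
    · monicity!
    · simp only [eval₂_sub, eval₂_pow, eval₂_X, eval₂_one]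
      linear_combination hx
  obtain ⟨n, rfl⟩ := IsIntegrallyClosed.isIntegral_iff.mp hint
  have hx' : (n:ℚ)^4 - (n:ℚ) - 1 = 0 := by simpa using hx
  have hn : n^4 - n - 1 = 0 := by exact_mod_cast hx'
  have hdvd : n ∣ 1 := ⟨n^3 - 1, by linarith⟩
  rcases Int.isUnit_iff.mp (isUnit_of_dvd_one hdvd) with rfl | rfl <;> omega

private lemma cubic_monic : (X^3 + 4*X - 1 : ℚ[X]).Monic := by monicity!

private lemma cubic_natDegree : (X^3 + 4*X - 1 : ℚ[X]).natDegree = 3 := by compute_degree!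

/-- The resolvent cubic is irreducible over `ℚ`. -/
private lemma cubic_irreducible : Irreducible (X^3 + 4*X - 1 : ℚ[X]) := by
  rw [cubic_monic.irreducible_iff_natDegree']
  refine ⟨?_, ?_⟩
  · intro h1
    have := cubic_natDegree
    rw [h1] at this
    simp at this
  · rintro f g hf hg hfg hmem
    rw [cubic_natDegree] at hmem
    simp only [Finset.mem_Ioc] at hmem
    have hg1 : g.natDegree = 1 := by omega
    have hgeq := hg.eq_X_add_C hg1
    have : (X^3 + 4*X - 1 : ℚ[X]).eval (-(g.coeff 0)) = 0 := by
      rw [← hfg, hgeq]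
      simp
    have := cubic_no_rat_root (-(g.coeff 0))
    apply this
    simpa using ‹(X^3 + 4*X - 1 : ℚ[X]).eval (-(g.coeff 0)) = 0›

private lemma quartic_monic : (X^4 - X - 1 : ℚ[X]).Monic := by monicity!

private lemma quartic_natDegree : (X^4 - X - 1 : ℚ[X]).natDegree = 4 := by compute_degree!

/-- The quartic `X^4 - X - 1` is irreducible over `ℚ`. -/
private lemma quartic_irreducible : Irreducible (X^4 - X - 1 : ℚ[X]) := by
  rw [quartic_monic.irreducible_iff_natDegree']
  refine ⟨?_, ?_⟩
  · intro h1
    have := quartic_natDegree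
    rw [h1] at this
    simp at this
  · rintro f g hf hg hfg hmem
    rw [quartic_natDegree] at hmem
    simp only [Finset.mem_Ioc] at hmem
    have hfg4 : f.natDegree + g.natDegree = 4 := by
      rw [← hf.natDegree_mul hg, hfg, quartic_natDegree]
    rcases (by omega : g.natDegree = 1 ∨ g.natDegree = 2) with hgd | hgd
    · -- g has degree 1 : rational root
      have hgeq := hg.eq_X_add_C hgd
      have hroot : (X^4 - X - 1 : ℚ[X]).eval (-(g.coeff 0)) = 0 := by
        rw [← hfg, hgeq]; simp
      apply quartic_no_rat_root (-(g.coeff 0))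
      simpa using hroot
    · -- both degree 2
      have hfd : f.natDegree = 2 := by omega
      have hfeq := monic_quadratic_eq hf hfd
      have hgeq := monic_quadratic_eq hg hgd
      have key : (X^2 + C (f.coeff 1) * X + C (f.coeff 0)) *
          (X^2 + C (g.coeff 1) * X + C (g.coeff 0)) = (X^4 - X - C 1 : ℚ[X]) := by
        rw [← hfeq, ← hgeq, hfg, C_1]
      have := quad_factor_aux key
      exact cubic_no_rat_root ((f.coeff 1)^2) this

noncomputable section

private def f4 : ℚ[X] := X^4 - X - 1

private lemma f4_irr : Irreducible f4 := quartic_irreducible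

private instance : Fact (Irreducible f4) := ⟨f4_irr⟩

private lemma f4_ne_zero : f4 ≠ 0 := quartic_monic.ne_zero

private abbrev Kq : Type := AdjoinRoot f4

private lemma finrank_Kq : Module.finrank ℚ Kq = 4 := by
  have h := (AdjoinRoot.powerBasis f4_ne_zero).finrank
  have hdim : (AdjoinRoot.powerBasis f4_ne_zero).dim = f4.natDegree := rfl
  rw [h, hdim]
  exact quartic_natDegree

private instance : FiniteDimensional ℚ Kq := (AdjoinRoot.powerBasis f4_ne_zero).finite

set_option synthInstance.maxHeartbeats 1000000 in
theorem stmt_15' :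
      Module.finrank ℚ Kq = 4 ∧
        ∀ S : Subring Kq, (algebraMap ℚ Kq).range ≤ S →
          S = (algebraMap ℚ Kq).range ∨ S = ⊤ := by
  refine ⟨finrank_Kq, fun S hS => ?_⟩
  classical
  have halg : Algebra.IsAlgebraic ℚ Kq := Algebra.IsAlgebraic.of_finite ℚ Kq
  obtain ⟨E, hE⟩ : ∃ E : Subalgebra ℚ Kq, E.toSubring = S :=
    ⟨{ toSubsemiring := S.toSubsemiring
       algebraMap_mem' := fun r => hS ⟨r, rfl⟩ }, SetLike.ext fun x => Iff.rfl⟩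
  have hfield : IsField E := Subalgebra.isField_of_algebraic E
  obtain ⟨F, hFE⟩ : ∃ F : IntermediateField ℚ Kq, F.toSubalgebra = E :=
    ⟨E.toIntermediateField' hfield, toSubalgebra_toIntermediateField' E hfield⟩
  set d := Module.finrank ℚ F with hd
  set e := Module.finrank F Kq with he
  have hde : d * e = 4 := by
    rw [hd, he, Module.finrank_mul_finrank]; exact finrank_Kq
  have hdpos : 0 < d := Module.finrank_pos
  have hdle : d ≤ 4 := Nat.le_of_dvd (by norm_num) ⟨e, hde.symm⟩
  interval_cases d
  · -- d = 1 : F = ⊥, so S is the image of ℚ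
    left
    have hbot : F = ⊥ := IntermediateField.finrank_eq_one_iff.mp hd.symm
    have hEbot : E = ⊥ := by rw [← hFE, hbot]; rfl
    rw [← hE, hEbot]
    ext x
    simp [Algebra.mem_bot, RingHom.mem_range, Subalgebra.mem_toSubring, eq_comm]
  · -- d = 2 : impossible
    exfalso
    have he2 : e = 2 := by omega
    set α : Kq := AdjoinRoot.root f4 with hα
    have htop : F⟮α⟯ = ⊤ := by
      apply IntermediateField.restrictScalars_injective ℚ
      rw [IntermediateField.restrictScalars_top]
      erw [IntermediateField.restrictScalars_adjoin (K := F)]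
      have h2 : adjoin ℚ {α} = (⊤ : IntermediateField ℚ Kq) :=
        IntermediateField.adjoin_root_eq_top f4
      rw [eq_top_iff, ← h2]
      exact adjoin.mono ℚ _ _ (Set.subset_union_right)
    have hint : IsIntegral F α := IsIntegral.of_finite F α
    have hmindeg : (minpoly F α).natDegree = 2 := by
      have h1 := IntermediateField.adjoin.finrank hint
      rw [htop] at h1
      rw [← h1]
      rw [IntermediateField.finrank_top']
      omega
    have hmono : (minpoly F α).Monic := minpoly.monic hint
    have hdvd : minpoly F α ∣ f4.map (algebraMap ℚ F) := by
      apply minpoly.dvd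
      rw [aeval_map_algebraMap]
      show (Polynomial.aeval α) f4 = 0
      rw [aeval_def]
      erw [AdjoinRoot.algebraMap_eq]
      exact AdjoinRoot.eval₂_root f4
    obtain ⟨h, hgh⟩ := hdvd
    have hmapmonic : (f4.map (algebraMap ℚ F)).Monic := quartic_monic.map _
    have hmapdeg : (f4.map (algebraMap ℚ F)).natDegree = 4 := by
      rw [natDegree_map]; exact quartic_natDegree
    have hhmonic : h.Monic := hmono.of_mul_monic_left (hgh ▸ hmapmonic)
    have hhdeg : h.natDegree = 2 := by
      have := hmapdeg
      rw [hgh, hmono.natDegree_mul hhmonic, hmindeg] at this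
      omega
    have hgeq := monic_quadratic_eq hmono hmindeg
    have hheq := monic_quadratic_eq hhmonic hhdeg
    have hmap : f4.map (algebraMap ℚ F) = X^4 - X - C 1 := by
      simp [f4, Polynomial.map_sub, Polynomial.map_pow, Polynomial.map_one]
    have key : (X^2 + C ((minpoly F α).coeff 1) * X + C ((minpoly F α).coeff 0)) *
        (X^2 + C (h.coeff 1) * X + C (h.coeff 0)) = (X^4 - X - C 1 : (↥F)[X]) := by
      rw [← hgeq, ← hheq, ← hgh, hmap]
    have hres := quad_factor_aux key
    -- β := p^2 ∈ F is a root of the irreducible cubic X^3 + 4X - 1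
    set β : F := ((minpoly F α).coeff 1)^2 with hβ
    have hβroot : (Polynomial.aeval β) (X^3 + 4*X - 1 : ℚ[X]) = 0 := by
      simp only [map_sub, map_add, map_mul, map_pow, aeval_X, aeval_one, map_ofNat]
      linear_combination hres
    have hβint : IsIntegral ℚ β := IsIntegral.of_finite ℚ β
    have hmineq : minpoly ℚ β = X^3 + 4*X - 1 :=
      (minpoly.eq_of_irreducible_of_monic cubic_irreducible hβroot cubic_monic).symm
    have hdvd3 : (minpoly ℚ β).natDegree ∣ Module.finrank ℚ F := minpoly.degree_dvd hβint
    rw [hmineq, cubic_natDegree] at hdvd3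
    rw [← hd] at hdvd3
    omega
  · -- d = 3 : impossible since 3 ∤ 4
    exfalso; omega
  · -- d = 4 : F = ⊤, so S = ⊤
    right
    have h1 : Module.finrank ℚ F.toSubalgebra = Module.finrank ℚ Kq := by
      rw [IntermediateField.finrank_eq_finrank_subalgebra, finrank_Kq, ← hd]
    have hfr : F.toSubalgebra = ⊤ := by
      rw [← Algebra.toSubmodule_eq_top]
      apply Submodule.eq_top_of_finrank_eq
      rw [Subalgebra.finrank_toSubmodule]
      exact h1
    have hEtop : E = ⊤ := by rw [← hFE]; exact hfr
    rw [← hE, hEtop]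
    exact Algebra.top_toSubring

/-- There is a field extension `K` of `ℚ` of degree `4` (not a prime) with no
intermediate ring strictly between `ℚ` and `K`. -/
theorem stmt_15 :
    ∃ (K : Type) (_ : Field K) (_ : Algebra ℚ K),
      Module.finrank ℚ K = 4 ∧
        ∀ S : Subring K, (algebraMap ℚ K).range ≤ S →
          S = (algebraMap ℚ K).range ∨ S = ⊤ := by
  exact ⟨Kq, inferInstance, inferInstance, stmt_15'⟩

end
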